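/- Let γ ∈ (0,1), let 0 < Δ < 1/(2γ), and C > 0. Let T, Z : ℕ⁺ → ℕ⁺ → ℝ satisfy |T i j| < Δ/(ζ(3)·i³·j³) and |Z i j| < Δ/(ζ(3)·i³·j³) for all i, j ≥ 1, and let v : ℕ⁺ → ℝ satisfy |v j| ≤ C·j for all j ≥ 1. Define matrix products entrywise by (A·B) i j = ∑_{m=1}^∞ (A i m)·(B m j) (these series converge absolutely under the stated bounds), let T^0 be the identity matrix, and define F i j = ∑_{r=0}^∞ γ^r · (T^r·(T − Z)) i j. Then for every i ≥ 1 the series ∑_{j=1}^∞ (F i j)·(v j) converges absolutely and sup_{i≥1} |∑_{j=1}^∞ (F i j)·(v j)| < 4·C·Δ·ζ(2)/ζ(3). -/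

import Mathlib

/-- The Riemann zeta value ζ(2) = ∑_{n=1}^∞ 1/n². -/
noncomputable def zeta2 : ℝ := ∑' n : ℕ+, 1 / (n : ℝ) ^ 2

/-- The Riemann zeta value ζ(3) = ∑_{n=1}^∞ 1/n³. -/
noncomputable def zeta3 : ℝ := ∑' n : ℕ+, 1 / (n : ℝ) ^ 3

/-- Entrywise product of infinite matrices: `(A·B) i j = ∑_{m=1}^∞ A i m · B m j`. -/
noncomputable def matMul (A B : ℕ+ → ℕ+ → ℝ) : ℕ+ → ℕ+ → ℝ :=
  fun i j => ∑' m : ℕ+, A i m * B m j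

/-- Powers of an infinite matrix, with `T^0` the identity matrix. -/
noncomputable def matPow (T : ℕ+ → ℕ+ → ℝ) : ℕ → ℕ+ → ℕ+ → ℝ
  | 0 => fun i j => if i = j then 1 else 0
  | r + 1 => matMul T (matPow T r)

lemma S3 : Summable (fun n : ℕ+ => 1 / (n : ℝ) ^ 3) := by
  have h : Summable (fun n : ℕ => 1 / (n : ℝ) ^ 3) :=
    Real.summable_one_div_nat_pow.mpr (by norm_num)
  exact h.comp_injective PNat.coe_injective

lemma S2 : Summable (fun n : ℕ+ => 1 / (n : ℝ) ^ 2) := by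
  have h : Summable (fun n : ℕ => 1 / (n : ℝ) ^ 2) :=
    Real.summable_one_div_nat_pow.mpr (by norm_num)
  exact h.comp_injective PNat.coe_injective

lemma z3_ge_one : 1 ≤ zeta3 := by
  have := S3.le_tsum 1 (fun j _ => by positivity)
  rw [zeta3]; simpa using this

lemma z3_pos : (0:ℝ) < zeta3 := lt_of_lt_of_le one_pos z3_ge_one

lemma z2_pos : (0:ℝ) < zeta2 := by
  have := S2.le_tsum 1 (fun j _ => by positivity)
  rw [zeta2]; exact lt_of_lt_of_le one_pos (by simpa using this)

lemma pnat_one_le (m : ℕ+) : (1:ℝ) ≤ (m:ℝ) := by exact_mod_cast m.one_le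

lemma pnat_pow_one_le (m : ℕ+) (p : ℕ) : (1:ℝ) ≤ (m:ℝ) ^ p :=
  one_le_pow₀ (pnat_one_le m)

lemma tsum_pow_bound (p : ℕ) (Sp : Summable (fun n : ℕ+ => 1 / (n : ℝ) ^ p))
    {f : ℕ+ → ℝ} {c : ℝ}
    (h : ∀ m : ℕ+, |f m| ≤ c / (m : ℝ) ^ p) :
    Summable f ∧ |∑' m, f m| ≤ c * ∑' n : ℕ+, 1 / (n : ℝ) ^ p := by
  have hle : ∀ m : ℕ+, |f m| ≤ c * (1 / (m : ℝ) ^ p) := by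
    intro m; rw [mul_one_div]; exact h m
  have habs : Summable (fun m : ℕ+ => |f m|) :=
    Summable.of_nonneg_of_le (fun m => abs_nonneg _) hle (Sp.mul_left c)
  have hf : Summable f := habs.of_abs
  refine ⟨hf, ?_⟩
  have h1 : Summable (fun m : ℕ+ => ‖f m‖) := by
    simpa only [Real.norm_eq_abs] using habs
  have h2 : |∑' m, f m| ≤ ∑' m, |f m| := by
    simpa only [Real.norm_eq_abs] using norm_tsum_le_tsum_norm h1
  refine h2.trans ?_
  have h3 := Summable.tsum_le_tsum hle habs (Sp.mul_left c)
  rwa [tsum_mul_left] at h3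

lemma tsum_cube_bound {f : ℕ+ → ℝ} {c : ℝ}
    (h : ∀ m : ℕ+, |f m| ≤ c / (m : ℝ) ^ 3) :
    Summable f ∧ |∑' m, f m| ≤ c * zeta3 :=
  tsum_pow_bound 3 S3 h

lemma tsum_sq_bound {f : ℕ+ → ℝ} {c : ℝ}
    (h : ∀ m : ℕ+, |f m| ≤ c / (m : ℝ) ^ 2) :
    Summable f ∧ |∑' m, f m| ≤ c * zeta2 :=
  tsum_pow_bound 2 S2 h

/-- product bound for one matrix-multiplication entry -/
lemma prod_bound (a b : ℝ) (ha : 0 ≤ a) (hb : 0 ≤ b) (i m j : ℕ+) :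
    a / (zeta3 * (i:ℝ)^3 * (m:ℝ)^3) * (b / (zeta3 * (m:ℝ)^3 * (j:ℝ)^3))
      ≤ (a * b / (zeta3^2 * (i:ℝ)^3 * (j:ℝ)^3)) / (m:ℝ)^3 := by
  have hz := z3_pos
  have hm : (0:ℝ) < (m:ℝ)^3 := by positivity
  have hi : (0:ℝ) < (i:ℝ)^3 := by positivity
  have hj : (0:ℝ) < (j:ℝ)^3 := by positivity
  have heq : a / (zeta3 * (i:ℝ)^3 * (m:ℝ)^3) * (b / (zeta3 * (m:ℝ)^3 * (j:ℝ)^3))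
      = ((a * b / (zeta3^2 * (i:ℝ)^3 * (j:ℝ)^3)) / (m:ℝ)^3) * (1 / (m:ℝ)^3) := by
    rw [div_mul_div_comm, div_div, div_mul_div_comm, mul_one]
    ring_nf
  rw [heq]
  have h1 : 1 / (m:ℝ)^3 ≤ 1 := by
    rw [div_le_one hm]; exact pnat_pow_one_le m 3
  exact mul_le_of_le_one_right (by positivity) h1

lemma matpow_bound (Δ : ℝ) (hΔ0 : 0 < Δ) (T : ℕ+ → ℕ+ → ℝ)
    (hT : ∀ i j : ℕ+, |T i j| ≤ Δ / (zeta3 * (i:ℝ)^3 * (j:ℝ)^3)) :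
    ∀ r : ℕ, ∀ i j : ℕ+, |matPow T (r+1) i j| ≤ Δ^(r+1) / (zeta3 * (i:ℝ)^3 * (j:ℝ)^3) := by
  have hz := z3_pos
  intro r
  induction r with
  | zero =>
    intro i j
    have heq : matPow T 1 i j = T i j := by
      show matMul T (matPow T 0) i j = T i j
      rw [matMul]
      rw [tsum_eq_single j (fun m hm => by simp [matPow, hm])]
      simp [matPow]
    rw [heq, pow_one]; exact hT i j
  | succ r ih =>
    intro i j
    have hpt : ∀ m : ℕ+, |T i m * matPow T (r+1) m j|
        ≤ (Δ * Δ^(r+1) / (zeta3^2 * (i:ℝ)^3 * (j:ℝ)^3)) / (m:ℝ)^3 := by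
      intro m
      rw [abs_mul]
      refine le_trans (mul_le_mul (hT i m) (ih m j) (abs_nonneg _) (by positivity)) ?_
      exact prod_bound Δ (Δ^(r+1)) hΔ0.le (by positivity) i m j
    have := (tsum_cube_bound hpt).2
    have heq : (Δ * Δ^(r+1) / (zeta3^2 * (i:ℝ)^3 * (j:ℝ)^3)) * zeta3
        = Δ^(r+2) / (zeta3 * (i:ℝ)^3 * (j:ℝ)^3) := by
      have hi : ((i:ℝ))^3 ≠ 0 := by positivity
      have hj : ((j:ℝ))^3 ≠ 0 := by positivity
      field_simp
      ring
    show |matMul T (matPow T (r+1)) i j| ≤ _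
    rw [matMul]
    calc |∑' m : ℕ+, T i m * matPow T (r+1) m j|
        ≤ (Δ * Δ^(r+1) / (zeta3^2 * (i:ℝ)^3 * (j:ℝ)^3)) * zeta3 := this
      _ = Δ^(r+2) / (zeta3 * (i:ℝ)^3 * (j:ℝ)^3) := heq

/-- For `γ ∈ (0,1)`, `0 < Δ < 1/(2γ)`, `C > 0`, infinite matrices `T, Z` with
`|T i j|, |Z i j| < Δ/(ζ(3)·i³·j³)`, a vector `v` with `|v j| ≤ C·j`, and
`F i j = ∑_{r=0}^∞ γ^r (T^r·(T − Z)) i j`, for each `i` the series `∑_j (F i j)·(v j)`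
converges absolutely and `sup_i |∑_j (F i j)·(v j)| < 4·C·Δ·ζ(2)/ζ(3)`. -/
theorem stmt_7 (γ Δ C : ℝ) (hγ0 : 0 < γ) (hγ1 : γ < 1)
    (hΔ0 : 0 < Δ) (hΔ : Δ < 1 / (2 * γ)) (hC : 0 < C)
    (T Z : ℕ+ → ℕ+ → ℝ)
    (hT : ∀ i j : ℕ+, |T i j| < Δ / (zeta3 * (i : ℝ) ^ 3 * (j : ℝ) ^ 3))
    (hZ : ∀ i j : ℕ+, |Z i j| < Δ / (zeta3 * (i : ℝ) ^ 3 * (j : ℝ) ^ 3))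
    (v : ℕ+ → ℝ) (hv : ∀ j : ℕ+, |v j| ≤ C * (j : ℝ))
    (F : ℕ+ → ℕ+ → ℝ)
    (hF : ∀ i j : ℕ+,
      F i j = ∑' r : ℕ, γ ^ r * matMul (matPow T r) (fun i' j' => T i' j' - Z i' j') i j) :
    (∀ i : ℕ+, Summable fun j : ℕ+ => |F i j * v j|) ∧
    (⨆ i : ℕ+, |∑' j : ℕ+, F i j * v j|) < 4 * C * Δ * zeta2 / zeta3 := by
  have hz := z3_pos
  have hz1 := z3_ge_one
  -- γΔ < 1/2
  rw [lt_div_iff₀ (by positivity)] at hΔ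
  have hq : γ * Δ < 1/2 := by nlinarith
  have hq0 : 0 ≤ γ * Δ := by positivity
  have hq1 : γ * Δ < 1 := by linarith
  have h1q : (0:ℝ) < 1 - γ * Δ := by linarith
  -- bound on T - Z
  have hTZ : ∀ i j : ℕ+, |T i j - Z i j| ≤ 2 * Δ / (zeta3 * (i:ℝ)^3 * (j:ℝ)^3) := by
    intro i j
    have h1 := (hT i j).le
    have h2 := (hZ i j).le
    have h3 : |T i j - Z i j| ≤ |T i j| + |Z i j| := abs_sub _ _
    have : 2 * Δ / (zeta3 * (i:ℝ)^3 * (j:ℝ)^3)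
        = Δ / (zeta3 * (i:ℝ)^3 * (j:ℝ)^3) + Δ / (zeta3 * (i:ℝ)^3 * (j:ℝ)^3) := by ring
    rw [this]; linarith
  have hpow := matpow_bound Δ hΔ0 T (fun i j => (hT i j).le)
  -- bound on G r i j := matMul (matPow T r) (T - Z) i j
  have hG : ∀ r : ℕ, ∀ i j : ℕ+,
      |matMul (matPow T r) (fun i' j' => T i' j' - Z i' j') i j|
        ≤ 2 * Δ^(r+1) / (zeta3 * (i:ℝ)^3 * (j:ℝ)^3) := by
    intro r
    cases r with
    | zero =>
      intro i j
      have heq : matMul (matPow T 0) (fun i' j' => T i' j' - Z i' j') i j = T i j - Z i j := by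
        rw [matMul]
        rw [tsum_eq_single i (fun m hm => by simp [matPow, Ne.symm hm])]
        simp [matPow]
      rw [heq, pow_one]
      have := hTZ i j
      linarith
    | succ r =>
      intro i j
      have hpt : ∀ m : ℕ+, |matPow T (r+1) i m * (T m j - Z m j)|
          ≤ (Δ^(r+1) * (2 * Δ) / (zeta3^2 * (i:ℝ)^3 * (j:ℝ)^3)) / (m:ℝ)^3 := by
        intro m
        rw [abs_mul]
        refine le_trans (mul_le_mul (hpow r i m) (hTZ m j) (abs_nonneg _) (by positivity)) ?_
        exact prod_bound (Δ^(r+1)) (2*Δ) (by positivity) (by positivity) i m j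
      have hb := (tsum_cube_bound hpt).2
      have heq : (Δ^(r+1) * (2 * Δ) / (zeta3^2 * (i:ℝ)^3 * (j:ℝ)^3)) * zeta3
          = 2 * Δ^(r+1+1) / (zeta3 * (i:ℝ)^3 * (j:ℝ)^3) := by
        have hi : ((i:ℝ))^3 ≠ 0 := by positivity
        have hj : ((j:ℝ))^3 ≠ 0 := by positivity
        field_simp
        ring
      rw [matMul]
      exact le_of_le_of_eq hb heq
  -- bound on F
  set B : ℝ := 2 * Δ / (1 - γ * Δ) with hB
  have hBpos : 0 < B := by positivity
  have hFb : ∀ i j : ℕ+, |F i j| ≤ B / (zeta3 * (i:ℝ)^3 * (j:ℝ)^3) := by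
    intro i j
    rw [hF i j]
    set A : ℝ := 2 * Δ / (zeta3 * (i:ℝ)^3 * (j:ℝ)^3) with hA
    have hApos : 0 < A := by positivity
    have hpt : ∀ r : ℕ, |γ^r * matMul (matPow T r) (fun i' j' => T i' j' - Z i' j') i j|
        ≤ A * (γ*Δ)^r := by
      intro r
      rw [abs_mul, abs_pow, abs_of_pos hγ0]
      have h2 := hG r i j
      have heq : 2 * Δ^(r+1) / (zeta3 * (i:ℝ)^3 * (j:ℝ)^3) = A * Δ^r := by
        rw [hA]; field_simp; ring
      rw [heq] at h2
      calc γ^r * |matMul (matPow T r) (fun i' j' => T i' j' - Z i' j') i j|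
          ≤ γ^r * (A * Δ^r) := by
            exact mul_le_mul_of_nonneg_left h2 (by positivity)
        _ = A * (γ*Δ)^r := by rw [mul_pow]; ring
    have hgs : Summable (fun r : ℕ => A * (γ*Δ)^r) :=
      (summable_geometric_of_lt_one hq0 hq1).mul_left A
    have habs : Summable (fun r : ℕ =>
        |γ^r * matMul (matPow T r) (fun i' j' => T i' j' - Z i' j') i j|) :=
      Summable.of_nonneg_of_le (fun r => abs_nonneg _) hpt hgs
    have h1 : Summable (fun r : ℕ =>
        ‖γ^r * matMul (matPow T r) (fun i' j' => T i' j' - Z i' j') i j‖) := by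
      simpa only [Real.norm_eq_abs] using habs
    have h2 : |∑' r : ℕ, γ^r * matMul (matPow T r) (fun i' j' => T i' j' - Z i' j') i j|
        ≤ ∑' r : ℕ, |γ^r * matMul (matPow T r) (fun i' j' => T i' j' - Z i' j') i j| := by
      simpa only [Real.norm_eq_abs] using norm_tsum_le_tsum_norm h1
    refine h2.trans ?_
    have h3 := Summable.tsum_le_tsum hpt habs hgs
    rw [tsum_mul_left, tsum_geometric_of_lt_one hq0 hq1] at h3
    refine h3.trans_eq ?_
    rw [hA, hB]
    have hi : ((i:ℝ))^3 ≠ 0 := by positivity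
    have hj : ((j:ℝ))^3 ≠ 0 := by positivity
    field_simp
  -- per-row bound
  set K : ℝ := B * C / zeta3 with hK
  have hKpos : 0 < K := by positivity
  have hrow : ∀ i : ℕ+, (Summable fun j : ℕ+ => F i j * v j) ∧
      |∑' j : ℕ+, F i j * v j| ≤ K * zeta2 := by
    intro i
    have hi1 : (1:ℝ) ≤ (i:ℝ)^3 := pnat_pow_one_le i 3
    have hpt : ∀ j : ℕ+, |F i j * v j| ≤ K / (j:ℝ)^2 := by
      intro j
      rw [abs_mul]
      have h1 : |F i j| * |v j| ≤ (B / (zeta3 * (i:ℝ)^3 * (j:ℝ)^3)) * (C * (j:ℝ)) :=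
        mul_le_mul (hFb i j) (hv j) (abs_nonneg _) (by positivity)
      refine h1.trans ?_
      have hj0 : (0:ℝ) < (j:ℝ) := lt_of_lt_of_le one_pos (pnat_one_le j)
      have hi0 : (0:ℝ) < (i:ℝ) := lt_of_lt_of_le one_pos (pnat_one_le i)
      have heq : (B / (zeta3 * (i:ℝ)^3 * (j:ℝ)^3)) * (C * (j:ℝ))
          = (K / (j:ℝ)^2) * (1 / (i:ℝ)^3) := by
        rw [hK]; field_simp
      rw [heq]
      refine mul_le_of_le_one_right (by positivity) ?_
      rw [div_le_one (by positivity)]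
      exact hi1
    exact tsum_sq_bound hpt
  constructor
  · intro i
    exact ((hrow i).1).abs
  · have hsup : (⨆ i : ℕ+, |∑' j : ℕ+, F i j * v j|) ≤ K * zeta2 :=
      ciSup_le (fun i => (hrow i).2)
    refine lt_of_le_of_lt hsup ?_
    have hBlt : B < 4 * Δ := by
      rw [hB, div_lt_iff₀ h1q]
      nlinarith
    calc K * zeta2 < (4 * Δ * C / zeta3) * zeta2 := by
          rw [hK]
          have hmul : B * C < 4 * Δ * C := mul_lt_mul_of_pos_right hBlt hC
          apply mul_lt_mul_of_pos_right ?_ z2_pos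
          gcongr
      _ = 4 * C * Δ * zeta2 / zeta3 := by ring
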